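/- (Theorem 3(ii)–(iii), survival part.) Suppose 𝔼[L_A] > 0, 𝔼[L_B] > 0, and set a = 𝔼[L_A] + β_B·𝔼[L_B], b = 𝔼[L_B] + β_A·𝔼[L_A]. Fix S_total > 0 and let s_A = S_total·a/(a+b), s_B = S_total·b/(a+b), p*_opt = S_total/(S_total + a + b). Assume the layer-weighted equal free space allocation: S_A = s_A almost surely and S_B = s_B almost surely. Then for every attack size p with 0 < p < p*_opt, the point (x₀,y₀) = ( p·𝔼[L_A]/(1−p), p·𝔼[L_B]/(1−p) ) satisfies ℙ[E(x₀,y₀)] = 1, g(x₀,y₀) = x₀, and h(x₀,y₀) = y₀; in particular (x₀,y₀) ∈ 𝒫 and (1−p)·ℙ[E(x₀,y₀)] = 1−p (no failures occur beyond the initial attack). -/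

import Mathlib

open MeasureTheory ProbabilityTheory

variable {Ω : Type*} [MeasureSpace Ω]

/-- The survival event `E(x,y) = {S_A > x + β_B·y} ∩ {S_B > y + β_A·x}`. -/
def survEvent (SA SB : Ω → ℝ) (βA βB x y : ℝ) : Set Ω :=
  {ω | x + βB * y < SA ω} ∩ {ω | y + βA * x < SB ω}

/-- `g(x,y) = (𝔼[L] − (1−p)·𝔼[L·1_{E(x,y)}]) / ((1−p)·ℙ[E(x,y)])`; with `L = L_A` this is the
function `g` of the paper, with `L = L_B` it is the function `h`. -/
noncomputable def gFun (L SA SB : Ω → ℝ) (βA βB p x y : ℝ) : ℝ :=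
  ((∫ ω, L ω) - (1 - p) * ∫ ω in survEvent SA SB βA βB x y, L ω) /
    ((1 - p) * ((ℙ : Measure Ω) (survEvent SA SB βA βB x y)).toReal)

/-- The set 𝒫 of stable points. -/
noncomputable def stableSet (LA LB SA SB : Ω → ℝ) (βA βB p : ℝ) : Set (ℝ × ℝ) :=
  {q | 0 ≤ q.1 ∧ 0 ≤ q.2 ∧ 0 < (ℙ : Measure Ω) (survEvent SA SB βA βB q.1 q.2) ∧
    gFun LA SA SB βA βB p q.1 q.2 ≤ q.1 ∧ gFun LB SA SB βA βB p q.1 q.2 ≤ q.2}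
theorem stmt13 [IsProbabilityMeasure (ℙ : Measure Ω)]
    (LA LB SA SB : Ω → ℝ)
    (hLA0 : ∀ ω, 0 ≤ LA ω) (hLB0 : ∀ ω, 0 ≤ LB ω)
    (hLA : Integrable LA (ℙ : Measure Ω)) (hLB : Integrable LB (ℙ : Measure Ω))
    (hSAm : Measurable SA) (hSBm : Measurable SB)
    (βA βB : ℝ) (hβA : 0 ≤ βA) (hβB : 0 ≤ βB)
    (hLApos : 0 < ∫ ω, LA ω) (hLBpos : 0 < ∫ ω, LB ω)
    (a b : ℝ)
    (ha : a = (∫ ω, LA ω) + βB * ∫ ω, LB ω)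
    (hb : b = (∫ ω, LB ω) + βA * ∫ ω, LA ω)
    (Stot : ℝ) (hStot : 0 < Stot)
    (sA sB popt : ℝ)
    (hsA : sA = Stot * a / (a + b)) (hsB : sB = Stot * b / (a + b))
    (hpopt : popt = Stot / (Stot + a + b))
    (hSA : ∀ᵐ ω ∂(ℙ : Measure Ω), SA ω = sA)
    (hSB : ∀ᵐ ω ∂(ℙ : Measure Ω), SB ω = sB)
    (p : ℝ) (hp0 : 0 < p) (hpo : p < popt)
    (x₀ y₀ : ℝ)
    (hx₀ : x₀ = p * (∫ ω, LA ω) / (1 - p))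
    (hy₀ : y₀ = p * (∫ ω, LB ω) / (1 - p)) :
    (ℙ : Measure Ω) (survEvent SA SB βA βB x₀ y₀) = 1 ∧
    gFun LA SA SB βA βB p x₀ y₀ = x₀ ∧
    gFun LB SA SB βA βB p x₀ y₀ = y₀ ∧
    (x₀, y₀) ∈ stableSet LA LB SA SB βA βB p ∧
    (1 - p) * ((ℙ : Measure Ω) (survEvent SA SB βA βB x₀ y₀)).toReal = 1 - p := by
  have hapos : 0 < a := by rw [ha]; positivity
  have hbpos : 0 < b := by rw [hb]; positivity
  have habpos : 0 < a + b := by linarith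
  have hpopt1 : popt < 1 := by
    rw [hpopt, div_lt_one (by linarith)]; linarith
  have h1p : 0 < 1 - p := by linarith
  have key : p * (a + b) < Stot * (1 - p) := by
    have h := (lt_div_iff₀ (by linarith : (0:ℝ) < Stot + a + b)).mp (hpopt ▸ hpo)
    nlinarith
  have hx1 : x₀ + βB * y₀ < sA := by
    rw [hx₀, hy₀, hsA,
      show p * (∫ ω, LA ω) / (1 - p) + βB * (p * (∫ ω, LB ω) / (1 - p)) = p * a / (1 - p) from by
        rw [ha]; field_simp,
      div_lt_div_iff₀ h1p habpos]
    nlinarith [mul_lt_mul_of_pos_left key hapos]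
  have hy1 : y₀ + βA * x₀ < sB := by
    rw [hx₀, hy₀, hsB,
      show p * (∫ ω, LB ω) / (1 - p) + βA * (p * (∫ ω, LA ω) / (1 - p)) = p * b / (1 - p) from by
        rw [hb]; field_simp,
      div_lt_div_iff₀ h1p habpos]
    nlinarith [mul_lt_mul_of_pos_left key hbpos]
  have hae : ∀ᵐ ω ∂(ℙ : Measure Ω), ω ∈ survEvent SA SB βA βB x₀ y₀ := by
    filter_upwards [hSA, hSB] with ω h₁ h₂
    exact ⟨by simp only [Set.mem_setOf_eq, h₁]; exact hx1,
           by simp only [Set.mem_setOf_eq, h₂]; exact hy1⟩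
  have hEuniv : survEvent SA SB βA βB x₀ y₀ =ᵐ[(ℙ : Measure Ω)] Set.univ := by
    rw [Filter.eventuallyEq_univ]; exact hae
  have hE1 : (ℙ : Measure Ω) (survEvent SA SB βA βB x₀ y₀) = 1 := by
    rw [measure_congr hEuniv, measure_univ]
  have hIntA : ∫ ω in survEvent SA SB βA βB x₀ y₀, LA ω = ∫ ω, LA ω := by
    rw [setIntegral_congr_set hEuniv, setIntegral_univ]
  have hIntB : ∫ ω in survEvent SA SB βA βB x₀ y₀, LB ω = ∫ ω, LB ω := by
    rw [setIntegral_congr_set hEuniv, setIntegral_univ]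
  have hg : gFun LA SA SB βA βB p x₀ y₀ = x₀ := by
    rw [gFun, hE1, hIntA, hx₀]
    simp only [ENNReal.toReal_one, mul_one]
    field_simp; ring
  have hh : gFun LB SA SB βA βB p x₀ y₀ = y₀ := by
    rw [gFun, hE1, hIntB, hy₀]
    simp only [ENNReal.toReal_one, mul_one]
    field_simp; ring
  have hx0 : 0 ≤ x₀ := by rw [hx₀]; positivity
  have hy0 : 0 ≤ y₀ := by rw [hy₀]; positivity
  refine ⟨hE1, hg, hh, ⟨hx0, hy0, by rw [hE1]; norm_num, hg.le, hh.le⟩, by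
    rw [hE1]; simp⟩
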